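/- The Alexander grading defines a filtration on the lattice chain complex: for every characteristic vector K for M, every E ⊆ V and every v ∈ E, one has A([K,E]) − A([K, E∖{v}]) + a_v(K,E) = a_v(K + 2v₀*, E) and A([K,E]) − A([K + 2v*, E∖{v}]) + b_v(K,E) = b_v(K + 2v₀*, E); in particular both left-hand sides are nonnegative, so each component of ∂[K,E] has Alexander grading at most A([K,E]). -/

import Mathlib

open Finset

variable {V : Type*}

/-- `M` is negative definite: `xᵀMx < 0` for every nonzero `x ∈ ℝ^V`. -/
def NegDef [Fintype V] (M : V → V → ℤ) : Prop :=
  ∀ x : V → ℝ, x ≠ 0 → (∑ v, ∑ w, (M v w : ℝ) * x v * x w) < 0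

/-- `K` is a characteristic vector for `M`: `K(v) ≡ v·v (mod 2)` for all `v`. -/
def IsChar (M : V → V → ℤ) (K : V → ℤ) : Prop :=
  ∀ v, Int.ModEq 2 (K v) (M v v)

/-- `f(K, I) = (1/2)(Σ_{v∈I} K(v) + (Σ_{v∈I} v)·(Σ_{v∈I} v))` (an exact integer division
for characteristic `K`). -/
def latF (M : V → V → ℤ) (K : V → ℤ) (I : Finset V) : ℤ :=
  ((∑ v ∈ I, K v) + ∑ v ∈ I, ∑ w ∈ I, M v w) / 2

/-- `g(K, E) = min_{I ⊆ E} f(K, I)`. -/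
def latG (M : V → V → ℤ) (K : V → ℤ) (E : Finset V) : ℤ :=
  (E.powerset.image (latF M K)).min'
    ⟨_, Finset.mem_image_of_mem _ (Finset.empty_mem_powerset E)⟩

/-- `B_v(K, E) = min { f(K, I) : v ∈ I ⊆ E }` (for `v ∈ E`). -/
def latB [DecidableEq V] (M : V → V → ℤ) (K : V → ℤ) (E : Finset V) (v : V) : ℤ :=
  ((E.erase v).powerset.image (fun I => latF M K (insert v I))).min'
    ⟨_, Finset.mem_image_of_mem _ (Finset.empty_mem_powerset _)⟩

/-- `a_v(K,E) = A_v(K,E) - g(K,E) = g(K, E∖{v}) - g(K,E)`. -/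
def lata [DecidableEq V] (M : V → V → ℤ) (K : V → ℤ) (E : Finset V) (v : V) : ℤ :=
  latG M K (E.erase v) - latG M K E

/-- `b_v(K,E) = B_v(K,E) - g(K,E)`. -/
def latb [DecidableEq V] (M : V → V → ℤ) (K : V → ℤ) (E : Finset V) (v : V) : ℤ :=
  latB M K E v - latG M K E

/-- The intersection matrix of the graph obtained by attaching the framing `m₀` to the extra
vertex `v₀ = none`, joined to `G` by the edges recorded by `e`. -/
def Mext (M : V → V → ℤ) (e : V → ℤ) (m₀ : ℤ) : Option V → Option V → ℤ := fun x y =>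
  match x, y with
  | some v, some w => M v w
  | some v, none => e v
  | none, some w => e w
  | none, none => m₀

/-- The coefficients of `Σ = v₀ + Σ_{v∈V} a_v·v`: `a = −M⁻¹e`, the unique solution of
`w·Σ = 0` for all `w ∈ V`. -/
noncomputable def sigmaC [Fintype V] [DecidableEq V] (M : V → V → ℤ) (e : V → ℤ) : V → ℚ :=
  fun v => -∑ u, ((Matrix.of fun a b => (M a b : ℚ))⁻¹ v u) * e u

/-- The rational homology class `Σ = v₀ + Σ_{v∈V} a_v·v` (coordinates). -/
noncomputable def sigmaV [Fintype V] [DecidableEq V] (M : V → V → ℤ) (e : V → ℤ) :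
    Option V → ℚ
  | none => 1
  | some v => sigmaC M e v

/-- The unique characteristic extension `L_{[K,E]}` of `K` over `v₀` (for the framing `m₀`)
with `a_{v₀}(L, E∪{v₀}) = b_{v₀}(L, E∪{v₀}) = 0`:
`L(v₀) = −m₀ + 2g(K,E) − 2g(K+2v₀*,E)`. -/
def LextV [DecidableEq V] (M : V → V → ℤ) (e : V → ℤ) (m₀ : ℤ) (K : V → ℤ) (E : Finset V) :
    Option V → ℤ
  | some v => K v
  | none => -m₀ + 2 * latG M K E - 2 * latG M (fun w => K w + 2 * e w) E

/-- The Alexander grading `A([K,E]) = (1/2)(L_{[K,E]}(Σ) + Σ·Σ)`, computed with the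
framing `m₀` on `v₀`. -/
noncomputable def AlexAt [Fintype V] [DecidableEq V] (M : V → V → ℤ) (e : V → ℤ) (m₀ : ℤ)
    (K : V → ℤ) (E : Finset V) : ℚ :=
  (1 / 2) * ((∑ x : Option V, (LextV M e m₀ K E x : ℚ) * sigmaV M e x)
    + ∑ x : Option V, ∑ y : Option V, (Mext M e m₀ x y : ℚ) * sigmaV M e x * sigmaV M e y)

/-- The Alexander grading `A([K,E])` (independent of the framing; computed with framing `0`). -/
noncomputable def Alex [Fintype V] [DecidableEq V] (M : V → V → ℤ) (e : V → ℤ)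
    (K : V → ℤ) (E : Finset V) : ℚ :=
  AlexAt M e 0 K E


section Aux

set_option linter.unusedSectionVars false

variable [Fintype V] [DecidableEq V]

lemma Nexpand (M : V → V → ℤ) (hsym : ∀ v w, M v w = M w v) (K : V → ℤ)
    {a : V} {I : Finset V} (ha : a ∉ I) :
    ((∑ v ∈ insert a I, K v) + ∑ v ∈ insert a I, ∑ w ∈ insert a I, M v w)
      = ((∑ v ∈ I, K v) + ∑ v ∈ I, ∑ w ∈ I, M v w) + (K a + M a a)
        + 2 * ∑ w ∈ I, M a w := by
  have h1 : ∀ v, ∑ w ∈ insert a I, M v w = M v a + ∑ w ∈ I, M v w :=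
    fun v => Finset.sum_insert ha
  rw [Finset.sum_insert ha, Finset.sum_insert ha, h1,
    Finset.sum_congr rfl (fun v _ => h1 v), Finset.sum_add_distrib,
    show ∑ v ∈ I, M v a = ∑ w ∈ I, M a w from
      Finset.sum_congr rfl (fun v _ => hsym v a)]
  ring

lemma char_dvd {M : V → V → ℤ} {K : V → ℤ} (hK : IsChar M K) (a : V) :
    2 ∣ (K a + M a a) := by
  have := (hK a).dvd
  omega

lemma char_shift {M : V → V → ℤ} {K : V → ℤ} (hK : IsChar M K) (c : V → ℤ) :
    IsChar M (fun w => K w + 2 * c w) := by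
  intro w
  have := (hK w).dvd
  simp only [Int.ModEq] at *
  omega

lemma Neven (M : V → V → ℤ) (hsym : ∀ v w, M v w = M w v) (K : V → ℤ)
    (hK : IsChar M K) (I : Finset V) :
    2 ∣ ((∑ v ∈ I, K v) + ∑ v ∈ I, ∑ w ∈ I, M v w) := by
  induction I using Finset.induction_on with
  | empty => simp
  | @insert a s ha ih =>
    rw [Nexpand M hsym K ha]
    have h2 := char_dvd hK a
    omega

lemma latF_insert (M : V → V → ℤ) (hsym : ∀ v w, M v w = M w v) (K : V → ℤ)
    (hK : IsChar M K) {a : V} {I : Finset V} (ha : a ∉ I) :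
    latF M K (insert a I)
      = latF M (fun w => K w + 2 * M a w) I + (K a + M a a) / 2 := by
  have hc : IsChar M (fun w => K w + 2 * M a w) := char_shift hK _
  have h1 : 2 ∣ ((∑ v ∈ I, (K v + 2 * M a v)) + ∑ v ∈ I, ∑ w ∈ I, M v w) :=
    Neven M hsym _ hc I
  have h2 := char_dvd hK a
  have hN : ((∑ v ∈ insert a I, K v) + ∑ v ∈ insert a I, ∑ w ∈ insert a I, M v w)
      = ((∑ v ∈ I, (K v + 2 * M a v)) + ∑ v ∈ I, ∑ w ∈ I, M v w) + (K a + M a a) := by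
    rw [Nexpand M hsym K ha, Finset.sum_add_distrib, ← Finset.mul_sum]
    ring
  simp only [latF]
  omega

lemma latG_le (M : V → V → ℤ) (K : V → ℤ) {E I : Finset V} (h : I ⊆ E) :
    latG M K E ≤ latF M K I :=
  Finset.min'_le _ _ (Finset.mem_image_of_mem _ (Finset.mem_powerset.mpr h))

lemma latG_exists (M : V → V → ℤ) (K : V → ℤ) (E : Finset V) :
    ∃ I ⊆ E, latG M K E = latF M K I := by
  have h := Finset.min'_mem (E.powerset.image (latF M K))
    ⟨_, Finset.mem_image_of_mem _ (Finset.empty_mem_powerset E)⟩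
  rw [Finset.mem_image] at h
  obtain ⟨I, hI, hEq⟩ := h
  exact ⟨I, Finset.mem_powerset.mp hI, hEq.symm⟩

lemma latG_mono (M : V → V → ℤ) (K : V → ℤ) {E₁ E₂ : Finset V} (h : E₁ ⊆ E₂) :
    latG M K E₂ ≤ latG M K E₁ := by
  obtain ⟨I, hI, hEq⟩ := latG_exists M K E₁
  rw [hEq]
  exact latG_le M K (hI.trans h)

lemma latB_le (M : V → V → ℤ) (K : V → ℤ) (E : Finset V) (v : V) {I : Finset V}
    (h : I ⊆ E.erase v) : latB M K E v ≤ latF M K (insert v I) :=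
  Finset.min'_le _ _ (Finset.mem_image_of_mem _ (Finset.mem_powerset.mpr h))

lemma latB_exists (M : V → V → ℤ) (K : V → ℤ) (E : Finset V) (v : V) :
    ∃ I ⊆ E.erase v, latB M K E v = latF M K (insert v I) := by
  have h := Finset.min'_mem ((E.erase v).powerset.image (fun I => latF M K (insert v I)))
    ⟨_, Finset.mem_image_of_mem _ (Finset.empty_mem_powerset _)⟩
  rw [Finset.mem_image] at h
  obtain ⟨I, hI, hEq⟩ := h
  exact ⟨I, Finset.mem_powerset.mp hI, hEq.symm⟩

lemma latB_eq (M : V → V → ℤ) (hsym : ∀ v w, M v w = M w v) (K : V → ℤ)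
    (hK : IsChar M K) (E : Finset V) (v : V) :
    latB M K E v = latG M (fun w => K w + 2 * M v w) (E.erase v) + (K v + M v v) / 2 := by
  apply le_antisymm
  · obtain ⟨I, hI, hEq⟩ := latG_exists M (fun w => K w + 2 * M v w) (E.erase v)
    have hvI : v ∉ I := fun hvI => (Finset.mem_erase.mp (hI hvI)).1 rfl
    calc latB M K E v ≤ latF M K (insert v I) := latB_le M K E v hI
      _ = _ := by rw [latF_insert M hsym K hK hvI, hEq]
  · obtain ⟨I, hI, hEq⟩ := latB_exists M K E v
    have hvI : v ∉ I := fun hvI => (Finset.mem_erase.mp (hI hvI)).1 rfl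
    rw [hEq, latF_insert M hsym K hK hvI]
    exact add_le_add_left (latG_le M _ hI) _

lemma latG_le_latB (M : V → V → ℤ) (K : V → ℤ) {E : Finset V} {v : V} (hv : v ∈ E) :
    latG M K E ≤ latB M K E v := by
  obtain ⟨I, hI, hEq⟩ := latB_exists M K E v
  rw [hEq]
  exact latG_le M K (Finset.insert_subset hv (hI.trans (Finset.erase_subset _ _)))

lemma Mq_isUnit (M : V → V → ℤ) (hneg : NegDef M) :
    IsUnit (Matrix.of fun a b => ((M a b : ℚ))).det := by
  rw [isUnit_iff_ne_zero]
  intro h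
  obtain ⟨x, hx0, hx⟩ := Matrix.exists_mulVec_eq_zero_iff.mpr h
  have key : ∀ v, ∑ w, (M v w : ℚ) * x w = 0 := by
    intro v
    have := congrFun hx v
    simpa [Matrix.mulVec, dotProduct] using this
  have hx' : (fun v => ((x v : ℚ) : ℝ)) ≠ 0 := by
    intro hc
    apply hx0
    funext w
    have := congrFun hc w
    simpa using this
  have hz : ∑ v, ∑ w, (M v w : ℝ) * ((x v : ℚ) : ℝ) * ((x w : ℚ) : ℝ) = 0 := by
    refine Finset.sum_eq_zero fun v _ => ?_
    have h0 : ((∑ w, (M v w : ℚ) * x w : ℚ) : ℝ) = 0 := by rw [key v]; norm_num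
    push_cast at h0
    calc ∑ w, (M v w : ℝ) * ((x v : ℚ) : ℝ) * ((x w : ℚ) : ℝ)
        = ((x v : ℚ) : ℝ) * ∑ w, (M v w : ℝ) * ((x w : ℚ) : ℝ) := by
          rw [Finset.mul_sum]; exact Finset.sum_congr rfl fun w _ => by ring
      _ = 0 := by rw [h0]; ring
  have := hneg _ hx'
  rw [hz] at this
  exact lt_irrefl 0 this

lemma sigmaC_eq (M : V → V → ℤ) (e : V → ℤ) :
    sigmaC M e = -(Matrix.of fun a b => ((M a b : ℚ)))⁻¹.mulVec (fun u => (e u : ℚ)) := by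
  funext v
  simp [sigmaC, Matrix.mulVec, dotProduct]

lemma Msigma (M : V → V → ℤ) (hneg : NegDef M) (e : V → ℤ) (v : V) :
    ∑ w, (M v w : ℚ) * sigmaC M e w = -(e v : ℚ) := by
  have h : (Matrix.of fun a b => ((M a b : ℚ))) * (Matrix.of fun a b => ((M a b : ℚ)))⁻¹ = 1 :=
    Matrix.mul_nonsing_inv _ (Mq_isUnit M hneg)
  have h2 : (Matrix.of fun a b => ((M a b : ℚ))).mulVec (sigmaC M e)
      = -(fun u => (e u : ℚ)) := by
    rw [sigmaC_eq, Matrix.mulVec_neg, Matrix.mulVec_mulVec, h, Matrix.one_mulVec]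
  have := congrFun h2 v
  simpa [Matrix.mulVec, dotProduct] using this

lemma Alex_eq (M : V → V → ℤ) (hneg : NegDef M) (e : V → ℤ) (K : V → ℤ) (E : Finset V) :
    Alex M e K E = (1 / 2) * (∑ w, ((K w : ℚ) + (e w : ℚ)) * sigmaC M e w)
      + (latG M K E : ℚ) - (latG M (fun w => K w + 2 * e w) E : ℚ) := by
  have hd : ∑ w, ∑ u, (M w u : ℚ) * sigmaC M e w * sigmaC M e u
      = ∑ w, -(e w : ℚ) * sigmaC M e w := by
    refine Finset.sum_congr rfl fun w _ => ?_
    calc ∑ u, (M w u : ℚ) * sigmaC M e w * sigmaC M e u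
        = sigmaC M e w * ∑ u, (M w u : ℚ) * sigmaC M e u := by
          rw [Finset.mul_sum]; exact Finset.sum_congr rfl fun u _ => by ring
      _ = _ := by rw [Msigma M hneg e w]; ring
  unfold Alex AlexAt
  rw [Fintype.sum_option, Fintype.sum_option]
  simp only [Fintype.sum_option, Mext, sigmaV, LextV, mul_one, one_mul, mul_zero,
    zero_mul, Int.cast_zero, neg_zero, zero_add]
  rw [Finset.sum_add_distrib, hd,
    show ∑ w, ((K w : ℚ) + (e w : ℚ)) * sigmaC M e w
      = ∑ w, (K w : ℚ) * sigmaC M e w + ∑ w, (e w : ℚ) * sigmaC M e w by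
        rw [← Finset.sum_add_distrib]; exact Finset.sum_congr rfl fun w _ => by ring,
    show ∑ w, -(e w : ℚ) * sigmaC M e w = -∑ w, (e w : ℚ) * sigmaC M e w by
      rw [← Finset.sum_neg_distrib]; exact Finset.sum_congr rfl fun w _ => by ring]
  push_cast
  ring

end Aux

/-- the Alexander grading filters the lattice complex: for `v ∈ E`,
`A([K,E]) − A([K,E∖{v}]) + a_v(K,E) = a_v(K+2v₀*,E)` and
`A([K,E]) − A([K+2v*,E∖{v}]) + b_v(K,E) = b_v(K+2v₀*,E)`; in particular both left-hand
sides are nonnegative, so each component of `∂[K,E]` has Alexander grading at most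
`A([K,E])`. -/
theorem stmt10 [Fintype V] [DecidableEq V] (M : V → V → ℤ)
    (hsym : ∀ v w, M v w = M w v)
    (hoff : ∀ v w, v ≠ w → M v w = 0 ∨ M v w = 1)
    (hneg : NegDef M)
    (e : V → ℤ) (he : ∀ v, e v = 0 ∨ e v = 1)
    (K : V → ℤ) (hK : IsChar M K) (E : Finset V) (v : V) (hv : v ∈ E) :
    (Alex M e K E - Alex M e K (E.erase v) + (lata M K E v : ℚ)
        = (lata M (fun w => K w + 2 * e w) E v : ℚ)) ∧
    (Alex M e K E - Alex M e (fun w => K w + 2 * M v w) (E.erase v) + (latb M K E v : ℚ)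
        = (latb M (fun w => K w + 2 * e w) E v : ℚ)) ∧
    (0 ≤ Alex M e K E - Alex M e K (E.erase v) + (lata M K E v : ℚ)) ∧
    (0 ≤ Alex M e K E - Alex M e (fun w => K w + 2 * M v w) (E.erase v) + (latb M K E v : ℚ)) ∧
    (-(lata M K E v : ℚ) + Alex M e K (E.erase v) ≤ Alex M e K E) ∧
    (-(latb M K E v : ℚ) + Alex M e (fun w => K w + 2 * M v w) (E.erase v) ≤ Alex M e K E) := by
  have hK' : IsChar M (fun w => K w + 2 * e w) := char_shift hK e
  have hK2 : IsChar M (fun w => K w + 2 * M v w) := char_shift hK (M v)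
  have hA1 := Alex_eq M hneg e K E
  have hA2 := Alex_eq M hneg e K (E.erase v)
  have hA3 := Alex_eq M hneg e (fun w => K w + 2 * M v w) (E.erase v)
  have hMs := Msigma M hneg e v
  have hc2 := char_dvd hK v
  have hC : ∑ w, (((K w + 2 * M v w : ℤ) : ℚ) + (e w : ℚ)) * sigmaC M e w
      = ∑ w, ((K w : ℚ) + (e w : ℚ)) * sigmaC M e w
        + 2 * ∑ w, (M v w : ℚ) * sigmaC M e w := by
    rw [Finset.mul_sum, ← Finset.sum_add_distrib]
    refine Finset.sum_congr rfl fun w _ => ?_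
    push_cast
    ring
  rw [hMs] at hC
  have hB1 : latB M K E v
      = latG M (fun w => K w + 2 * M v w) (E.erase v) + (K v + M v v) / 2 :=
    latB_eq M hsym K hK E v
  have hB2 : latB M (fun w => K w + 2 * e w) E v
      = latG M (fun w => K w + 2 * M v w + 2 * e w) (E.erase v)
        + ((K v + M v v) / 2 + e v) := by
    rw [latB_eq M hsym _ hK' E v]
    have h1 : (fun w => K w + 2 * e w + 2 * M v w)
        = (fun w => K w + 2 * M v w + 2 * e w) := by funext w; ring
    rw [h1]
    congr 1
    omega
  have hB1' := congrArg (Int.cast : ℤ → ℚ) hB1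
  have hB2' := congrArg (Int.cast : ℤ → ℚ) hB2
  push_cast at hB1' hB2'
  have e1 : Alex M e K E - Alex M e K (E.erase v) + (lata M K E v : ℚ)
      = (lata M (fun w => K w + 2 * e w) E v : ℚ) := by
    simp only [lata]; push_cast; linarith [hA1, hA2]
  have e2 : Alex M e K E - Alex M e (fun w => K w + 2 * M v w) (E.erase v)
        + (latb M K E v : ℚ)
      = (latb M (fun w => K w + 2 * e w) E v : ℚ) := by
    simp only [latb]; push_cast; linarith [hA1, hA3, hC, hB1', hB2']
  have h3 : (0 : ℚ) ≤ (lata M (fun w => K w + 2 * e w) E v : ℚ) := by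
    simp only [lata]; push_cast
    have := latG_mono M (fun w => K w + 2 * e w) (Finset.erase_subset v E)
    have : ((latG M (fun w => K w + 2 * e w) E : ℤ) : ℚ)
        ≤ ((latG M (fun w => K w + 2 * e w) (E.erase v) : ℤ) : ℚ) := by exact_mod_cast this
    linarith
  have h4 : (0 : ℚ) ≤ (latb M (fun w => K w + 2 * e w) E v : ℚ) := by
    simp only [latb]; push_cast
    have := latG_le_latB M (fun w => K w + 2 * e w) (E := E) (v := v) hv
    have : ((latG M (fun w => K w + 2 * e w) E : ℤ) : ℚ)
        ≤ ((latB M (fun w => K w + 2 * e w) E v : ℤ) : ℚ) := by exact_mod_cast this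
    linarith
  exact ⟨e1, e2, e1 ▸ h3, e2 ▸ h4, by linarith [e1, h3], by linarith [e2, h4]⟩
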